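/- Let R be a one-dimensional integral domain in which every nonzero element lies in only finitely many prime ideals. Then R is an sQQR-domain if and only if R is a Prüfer domain. -/

import Mathlib

noncomputable section

/-- The image of `A` in `L` under the algebra map, as a set. -/
def imageR (A L : Type*) [CommRing A] [CommRing L] [Algebra A L] : Set L :=
  Set.range (algebraMap A L)

/-- The Kaplansky transform of an ideal `I` of `A`, computed inside `L`. -/
def omegaSet (A L : Type*) [CommRing A] [CommRing L] [Algebra A L] (I : Ideal A) : Set L :=
  {x : L | ∀ a ∈ I, ∃ n : ℕ, 1 ≤ n ∧ ∃ r : A, (algebraMap A L a) ^ n * x = algebraMap A L r}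

/-- The localization of `A` at the prime `P`, viewed as a subset of `L`. -/
def locSet (A L : Type*) [CommRing A] [CommRing L] [Algebra A L] (P : Ideal A) : Set L :=
  {x : L | ∃ s : A, s ∉ P ∧ ∃ r : A, x * algebraMap A L s = algebraMap A L r}

/-- The conductor ideal `(A :_A U) = {r : A | r • U ⊆ A}`. -/
def condIdeal (A L : Type*) [CommRing A] [CommRing L] [Algebra A L] (U : Set L) : Ideal A where
  carrier := {r : A | ∀ u ∈ U, ∃ r' : A, algebraMap A L r * u = algebraMap A L r'}
  zero_mem' := fun u _ => ⟨0, by simp⟩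
  add_mem' := by
    rintro a b ha hb u hu
    obtain ⟨a', ha'⟩ := ha u hu
    obtain ⟨b', hb'⟩ := hb u hu
    exact ⟨a' + b', by rw [map_add, map_add, add_mul, ha', hb']⟩
  smul_mem' := by
    rintro c r h u hu
    obtain ⟨r', hr'⟩ := h u hu
    exact ⟨c * r', by rw [smul_eq_mul, map_mul, map_mul, mul_assoc, hr']⟩

/-- A domain is an sQQR-domain if every simple overring `R[u]`, `u` in the quotient field,
is an intersection of localizations of `R` at primes. -/
def IsSQQR (A : Type*) [CommRing A] [IsDomain A] : Prop :=
  ∀ u : FractionRing A, ∃ Ps : Set (Ideal A), (∀ P ∈ Ps, P.IsPrime) ∧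
    (↑(Algebra.adjoin A {u} : Subalgebra A (FractionRing A)) : Set (FractionRing A)) =
      ⋂ P ∈ Ps, locSet A (FractionRing A) P

/-- A Prüfer domain: every localization at a prime is a valuation domain. -/
def IsPrufer (A : Type*) [CommRing A] [IsDomain A] : Prop :=
  ∀ (P : Ideal A) (hP : P.IsPrime),
    haveI := hP
    letI : IsDomain (Localization.AtPrime P) := IsLocalization.isDomain_of_local_atPrime hP
    ValuationRing (Localization.AtPrime P)



set_option linter.unusedSectionVars false
set_option maxHeartbeats 1000000
set_option synthInstance.maxHeartbeats 400000

open Polynomial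

section Helpers

variable {R : Type*} [CommRing R] [IsDomain R]

lemma no_chain (hdim : ringKrullDim R = 1) {A B C : Ideal R} (hA : A.IsPrime) (hB : B.IsPrime)
    (hC : C.IsPrime) (h1 : A < B) (h2 : B < C) : False := by
  let p : LTSeries (PrimeSpectrum R) :=
    ⟨2, ![⟨A, hA⟩, ⟨B, hB⟩, ⟨C, hC⟩], by
      intro i
      fin_cases i
      · exact h1
      · exact h2⟩
  have := Order.LTSeries.length_le_krullDim p
  rw [show ringKrullDim R = Order.krullDim (PrimeSpectrum R) from rfl] at hdim
  rw [hdim] at this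
  norm_num [p] at this

lemma bot_lt_of_mem {P : Ideal R} {q : R} (hq : q ≠ 0) (hqP : q ∈ P) : (⊥ : Ideal R) < P := by
  refine lt_of_le_of_ne bot_le (fun h => hq ?_)
  have : q ∈ (⊥ : Ideal R) := h ▸ hqP
  simpa using this

lemma pole_patch (hdim : ringKrullDim R = 1) (P : Ideal R) (hP : P.IsPrime) (q : R) (hq : q ≠ 0)
    (hqP : q ∈ P) (M : Ideal R) (hM : M.IsPrime) (hne : P ≠ M) :
    ∃ w, w ∉ M ∧ ∃ s, s ∉ P ∧ ∃ t, w * s = q * t := by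
  -- P ⊄ M
  have hPM : ¬ P ≤ M := by
    intro hle
    exact no_chain hdim Ideal.bot_prime hP hM (bot_lt_of_mem hq hqP) (lt_of_le_of_ne hle hne)
  obtain ⟨z, hzP, hzM⟩ := SetLike.not_le_iff_exists.mp hPM
  -- work in the localization at P
  letI A := Localization.AtPrime P
  haveI := hP
  letI : IsDomain A := IsLocalization.isDomain_of_local_atPrime hP
  set φ := algebraMap R A with hφ
  have hrad : φ z ∈ (Ideal.span {φ q}).radical := by
    rw [Ideal.radical_eq_sInf]
    refine Ideal.mem_sInf.mpr ?_
    rintro J ⟨hJle, hJprime⟩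
    set Q := J.comap φ with hQdef
    haveI := hJprime
    have hQp : Q.IsPrime := Ideal.IsPrime.comap φ
    have hQle : Q ≤ P := by
      intro w hw
      by_contra hwP
      have hu : IsUnit (φ w) := IsLocalization.map_units A (⟨w, hwP⟩ : P.primeCompl)
      exact hJprime.ne_top (Ideal.eq_top_of_isUnit_mem _ hw hu)
    have hqQ : q ∈ Q := hJle (Ideal.subset_span rfl)
    have hQeq : Q = P := by
      by_contra hne'
      exact no_chain hdim Ideal.bot_prime hQp hP (bot_lt_of_mem hq hqQ)
        (lt_of_le_of_ne hQle hne')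
    have : z ∈ Q := hQeq ▸ hzP
    exact this
  obtain ⟨k, hk⟩ := Ideal.mem_radical_iff.mp hrad
  rw [Ideal.mem_span_singleton] at hk
  obtain ⟨a, ha⟩ := hk
  obtain ⟨⟨t, s⟩, hts⟩ := IsLocalization.mk'_surjective P.primeCompl a
  dsimp only at hts
  -- φ z ^ k = φ q * a ; multiply by φ s
  have h2 : φ (z ^ k * ↑s) = φ (q * t) := by
    rw [map_mul, map_mul, map_pow, ha, ← hts, mul_assoc, IsLocalization.mk'_spec]
  obtain ⟨σ, hσ⟩ := (IsLocalization.eq_iff_exists P.primeCompl A).mp h2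
  refine ⟨z ^ k, fun h => hzM (hM.mem_of_pow_mem k h), ↑s * ↑σ, ?_, t * ↑σ, ?_⟩
  · intro h
    rcases hP.mem_or_mem h with h' | h'
    · exact s.2 h'
    · exact σ.2 h'
  · calc z ^ k * (↑s * ↑σ) = ↑σ * (z ^ k * ↑s) := by ring
      _ = ↑σ * (q * t) := hσ
      _ = q * (t * ↑σ) := by ring


lemma algmap_ne_zero {a : R} (ha : a ≠ 0) : algebraMap R (FractionRing R) a ≠ 0 := by
  intro h
  exact ha (IsFractionRing.injective R (FractionRing R) (by rw [h, map_zero]))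

lemma mem_locSet_div (P : Ideal R) {x y : R} (hy : y ≠ 0) :
    (algebraMap R (FractionRing R) x / algebraMap R (FractionRing R) y) ∈
      locSet R (FractionRing R) P ↔ ∃ s, s ∉ P ∧ ∃ t, x * s = y * t := by
  set K := FractionRing R
  have hY : algebraMap R K y ≠ 0 := algmap_ne_zero hy
  constructor
  · rintro ⟨s, hs, t, hst⟩
    refine ⟨s, hs, t, ?_⟩
    apply IsFractionRing.injective R K
    rw [map_mul, map_mul]
    field_simp at hst
    exact ((div_eq_iff hY).mp hst).trans (mul_comm _ _)
  · rintro ⟨s, hs, t, hst⟩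
    refine ⟨s, hs, t, ?_⟩
    have : algebraMap R K (x * s) = algebraMap R K (y * t) := by rw [hst]
    rw [map_mul, map_mul] at this
    field_simp
    rw [this, mul_comm (algebraMap R K y)]; exact mul_div_cancel_right₀ _ hY


lemma span_arg (x y c : R) (hx : x ≠ 0) (hy : y ≠ 0)
    (hv1 : (algebraMap R (FractionRing R) c /
        (algebraMap R (FractionRing R) x * algebraMap R (FractionRing R) y)) ∈
        Algebra.adjoin R {algebraMap R (FractionRing R) x / algebraMap R (FractionRing R) y})
    (hv2 : (algebraMap R (FractionRing R) c /
        (algebraMap R (FractionRing R) x * algebraMap R (FractionRing R) y)) ∈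
        Algebra.adjoin R {algebraMap R (FractionRing R) y / algebraMap R (FractionRing R) x}) :
    ∃ (nn mm : ℕ) (r : R), c ^ (mm + nn + 1) = r * x ^ (nn + 1) * y ^ (mm + 1) := by
  classical
  set K := FractionRing R
  set X := algebraMap R K x with hXdef
  set Y := algebraMap R K y with hYdef
  have hX0 : X ≠ 0 := algmap_ne_zero hx
  have hY0 : Y ≠ 0 := algmap_ne_zero hy
  set Xu : Kˣ := Units.mk0 X hX0 with hXu
  set Yu : Kˣ := Units.mk0 Y hY0 with hYu
  set uu : Kˣ := Xu * Yu⁻¹ with huu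
  set v : K := algebraMap R K c / (X * Y) with hvdef
  have huuval : (uu : K) = X / Y := by
    rw [huu, Units.val_mul, hXu, hYu]
    simp [div_eq_mul_inv]
  have huuval' : ((uu⁻¹ : Kˣ) : K) = Y / X := by
    rw [← inv_div]
    rw [← huuval]
    simp
  rw [Algebra.adjoin_singleton_eq_range_aeval] at hv1 hv2
  obtain ⟨p, hp⟩ := hv1
  obtain ⟨p', hp'⟩ := hv2
  set n := p.natDegree with hn
  set m := p'.natDegree with hm
  have huupow : ∀ i : ℕ, ((uu ^ (i : ℤ) : Kˣ) : K) = (X / Y) ^ i := fun i => by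
    rw [zpow_natCast, Units.val_pow_eq_pow_val, huuval]
  have huupowneg : ∀ j : ℕ, ((uu ^ (-(j : ℤ)) : Kˣ) : K) = (Y / X) ^ j := fun j => by
    rw [zpow_neg, ← inv_zpow, zpow_natCast, Units.val_pow_eq_pow_val, huuval']
  have hrep1 : v = ∑ i ∈ Finset.range (n + 1), p.coeff i • ((uu ^ (i : ℤ) : Kˣ) : K) := by
    have hp2 : Polynomial.aeval (X / Y) p = v := hp
    rw [← hp2, aeval_eq_sum_range]
    exact Finset.sum_congr rfl (fun i _ => by rw [huupow])
  have hrep2 : v = ∑ j ∈ Finset.range (m + 1), p'.coeff j • ((uu ^ (-(j : ℤ)) : Kˣ) : K) := by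
    have hp2' : Polynomial.aeval (Y / X) p' = v := hp'
    rw [← hp2', aeval_eq_sum_range]
    exact Finset.sum_congr rfl (fun j _ => by rw [huupowneg])
  set S : Set K := (fun i : ℤ => ((uu ^ i : Kˣ) : K)) '' Set.Icc (-(m : ℤ)) (n : ℤ) with hS
  have key2 : ∀ i ∈ Set.Icc (-(m : ℤ)) (n : ℤ), v * ((uu ^ i : Kˣ) : K) ∈ Submodule.span R S := by
    intro i hi
    obtain ⟨hi1, hi2⟩ := hi
    rcases le_or_gt 0 i with hpos | hneg
    · rw [hrep2, Finset.sum_mul]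
      refine Submodule.sum_mem _ (fun j hj => ?_)
      have hj' : (j : ℤ) ≤ m := by
        exact_mod_cast Nat.lt_succ_iff.mp (Finset.mem_range.mp hj)
      rw [smul_mul_assoc, ← Units.val_mul, ← zpow_add]
      refine Submodule.smul_mem _ _ (Submodule.subset_span ⟨-(j : ℤ) + i, ⟨?_, ?_⟩, rfl⟩)
      · linarith
      · linarith
    · rw [hrep1, Finset.sum_mul]
      refine Submodule.sum_mem _ (fun j hj => ?_)
      have hj' : (j : ℤ) ≤ n := by
        exact_mod_cast Nat.lt_succ_iff.mp (Finset.mem_range.mp hj)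
      rw [smul_mul_assoc, ← Units.val_mul, ← zpow_add]
      refine Submodule.smul_mem _ _ (Submodule.subset_span ⟨(j : ℤ) + i, ⟨?_, ?_⟩, rfl⟩)
      · linarith
      · linarith
  have key3 : ∀ k : ℕ, v ^ k ∈ Submodule.span R S := by
    intro k
    induction k with
    | zero =>
      refine pow_zero v ▸ Submodule.subset_span ⟨0, ⟨by simp, by simp⟩, by simp⟩
    | succ k ih =>
      have hmul : ∀ w ∈ Submodule.span R S, v * w ∈ Submodule.span R S := by
        intro w hwmem
        refine Submodule.span_induction ?_ ?_ ?_ ?_ hwmem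
        · rintro _ ⟨i, hi, rfl⟩
          exact key2 i hi
        · simpa using Submodule.zero_mem _
        · intro a b _ _ ha hb
          rw [mul_add]; exact Submodule.add_mem _ ha hb
        · intro a b _ hb
          rw [mul_smul_comm]; exact Submodule.smul_mem _ _ hb
      rw [pow_succ']
      exact hmul _ ih
  have key4 : ∀ w ∈ Submodule.span R S, ∃ r : R, (X ^ m * Y ^ n) * w = algebraMap R K r := by
    intro w hwmem
    refine Submodule.span_induction ?_ ?_ ?_ ?_ hwmem
    · rintro _ ⟨i, ⟨hi1, hi2⟩, rfl⟩
      refine ⟨x ^ ((m : ℤ) + i).toNat * y ^ ((n : ℤ) - i).toNat, ?_⟩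
      have ha : (((m : ℤ) + i).toNat : ℤ) = (m : ℤ) + i := Int.toNat_of_nonneg (by linarith)
      have hb : (((n : ℤ) - i).toNat : ℤ) = (n : ℤ) - i := Int.toNat_of_nonneg (by linarith)
      have hunit : Xu ^ (m : ℤ) * Yu ^ (n : ℤ) * uu ^ i =
          Xu ^ (((m : ℤ) + i).toNat : ℤ) * Yu ^ ((((n : ℤ) - i).toNat : ℤ)) := by
        rw [ha, hb, huu, mul_zpow, mul_mul_mul_comm, ← zpow_add, inv_zpow, ← zpow_neg,
          ← zpow_add, sub_eq_add_neg]
      have hval := congrArg (Units.val) hunit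
      simp only [Units.val_mul, Units.val_zpow_eq_zpow_val, Units.val_mk0, zpow_natCast] at hval
      rw [map_mul, map_pow, map_pow]
      calc (X ^ m * Y ^ n) * ((uu ^ i : Kˣ) : K)
          = (Xu : K) ^ m * (Yu : K) ^ n * ((uu : K)) ^ i := by
            rw [Units.val_zpow_eq_zpow_val]; norm_num [hXu, hYu]
        _ = (Xu : K) ^ (((m : ℤ) + i).toNat) * (Yu : K) ^ (((n : ℤ) - i).toNat) := hval
        _ = algebraMap R K x ^ ((m : ℤ) + i).toNat * algebraMap R K y ^ ((n : ℤ) - i).toNat := by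
            norm_num [hXu, hYu]
            rfl
    · exact ⟨0, by simp⟩
    · rintro a b _ _ ⟨r₁, hr₁⟩ ⟨r₂, hr₂⟩
      exact ⟨r₁ + r₂, by rw [mul_add, hr₁, hr₂, map_add]⟩
    · rintro a b _ ⟨r₀, hr₀⟩
      exact ⟨a * r₀, by rw [mul_smul_comm, hr₀, Algebra.smul_def, map_mul]⟩
  -- final computation
  obtain ⟨r, hr⟩ := key4 _ (key3 (m + n + 1))
  have hXY0 : X * Y ≠ 0 := mul_ne_zero hX0 hY0
  rw [hvdef, div_pow] at hr
  have hr2 : X ^ m * Y ^ n * (algebraMap R K c) ^ (m + n + 1) =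
      algebraMap R K r * (X * Y) ^ (m + n + 1) := by
    rw [← hr]
    rw [mul_assoc (X ^ m * Y ^ n), div_mul_cancel₀]; exact pow_ne_zero _ hXY0
  have hfin : (algebraMap R K c) ^ (m + n + 1) =
      algebraMap R K r * X ^ (n + 1) * Y ^ (m + 1) := by
    refine mul_left_cancel₀ (a := X ^ m * Y ^ n)
      (mul_ne_zero (pow_ne_zero m hX0) (pow_ne_zero n hY0)) ?_
    rw [hr2]
    ring
  refine ⟨n, m, r, IsFractionRing.injective R K ?_⟩
  rw [map_pow, map_mul, map_mul, map_pow, map_pow]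
  exact hfin


lemma main_dvd (hsq : IsSQQR R) (hdim : ringKrullDim R = 1)
    (hfin : ∀ a : R, a ≠ 0 → {P : Ideal R | P.IsPrime ∧ a ∈ P}.Finite)
    (M : Ideal R) (hM : M.IsPrime) (x y : R) (hx : x ≠ 0) (hy : y ≠ 0) :
    (∃ s, s ∉ M ∧ ∃ t, x * s = y * t) ∨ (∃ s, s ∉ M ∧ ∃ t, y * s = x * t) := by
  by_contra hcon
  push_neg at hcon
  obtain ⟨h₁, h₂⟩ := hcon
  have hxM : x ∈ M := by
    by_contra hxM
    exact h₂ x hxM y (mul_comm y x)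
  set q := x * y with hqdef
  have hq : q ≠ 0 := mul_ne_zero hx hy
  have hqM : q ∈ M := M.mul_mem_right y hxM
  have hfinq := hfin q hq
  set PP : Set (Ideal R) := {P | P.IsPrime ∧ q ∈ P ∧ P ≠ M} with hPP
  have hPPfin : PP.Finite := hfinq.subset (fun P hP => ⟨hP.1, hP.2.1⟩)
  classical
  set F : Finset (Ideal R) := hPPfin.toFinset with hF
  have hmemF : ∀ P, P ∈ F ↔ (P.IsPrime ∧ q ∈ P ∧ P ≠ M) := by
    intro P; rw [hF, Set.Finite.mem_toFinset]; rfl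
  have H : ∀ P : Ideal R, ∃ w, P ∈ F → (w ∉ M ∧ ∃ s, s ∉ P ∧ ∃ t, w * s = q * t) := by
    intro P
    by_cases hPF : P ∈ F
    · obtain ⟨hPp, hqP, hPne⟩ := (hmemF P).mp hPF
      obtain ⟨w, hw1, hw2⟩ := pole_patch hdim P hPp q hq hqP M hM hPne
      exact ⟨w, fun _ => ⟨hw1, hw2⟩⟩
    · exact ⟨1, fun h => absurd h hPF⟩
  choose w hw using H
  set c := ∏ P ∈ F, w P with hcdef
  have hcM : c ∉ M := by
    intro hc
    exact Submonoid.prod_mem M.primeCompl (fun P hPF => (hw P hPF).1) hc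
  have hcdvd : ∀ P ∈ F, ∃ s, s ∉ P ∧ ∃ t, c * s = q * t := by
    intro P hPF
    obtain ⟨-, s, hs, t, hst⟩ := hw P hPF
    refine ⟨s, hs, t * ∏ Q ∈ F.erase P, w Q, ?_⟩
    calc c * s = (w P * ∏ Q ∈ F.erase P, w Q) * s := by
          rw [hcdef, Finset.mul_prod_erase F w hPF]
      _ = (w P * s) * ∏ Q ∈ F.erase P, w Q := by ring
      _ = (q * t) * ∏ Q ∈ F.erase P, w Q := by rw [hst]
      _ = q * (t * ∏ Q ∈ F.erase P, w Q) := by ring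
  -- pass to the fraction field
  set K := FractionRing R
  -- the element v
  have hvloc : ∀ (P : Ideal R), P.IsPrime → P ≠ M →
      (algebraMap R K c / algebraMap R K q) ∈ locSet R K P := by
    intro P hPp hPne
    by_cases hqP : q ∈ P
    · have hPF : P ∈ F := (hmemF P).mpr ⟨hPp, hqP, hPne⟩
      exact (mem_locSet_div P hq).mpr (hcdvd P hPF)
    · exact (mem_locSet_div P hq).mpr ⟨q, hqP, c, mul_comm c q⟩
  -- first sQQR application, at u = X/Y
  have hv_adj1 : (algebraMap R K c / algebraMap R K q) ∈
      Algebra.adjoin R {algebraMap R K x / algebraMap R K y} := by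
    obtain ⟨Ps, hPs, heq⟩ := hsq (algebraMap R K x / algebraMap R K y)
    have hmem : (algebraMap R K c / algebraMap R K q) ∈
        ⋂ P ∈ Ps, locSet R (FractionRing R) P := by
      refine Set.mem_iInter₂.mpr (fun P hP => ?_)
      have hPp := hPs P hP
      have hulo : (algebraMap R K x / algebraMap R K y) ∈ locSet R K P := by
        have h0 : (algebraMap R K x / algebraMap R K y) ∈
            (↑(Algebra.adjoin R {algebraMap R K x / algebraMap R K y} :
              Subalgebra R (FractionRing R)) : Set (FractionRing R)) :=
          Algebra.subset_adjoin rfl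
        rw [heq] at h0
        exact Set.mem_iInter₂.mp h0 P hP
      have hPne : P ≠ M := by
        intro hPM
        obtain ⟨s, hs, t, hst⟩ := (mem_locSet_div P hy).mp hulo
        exact h₁ s (hPM ▸ hs) t hst
      exact hvloc P hPp hPne
    rw [← heq] at hmem
    exact hmem
  -- second sQQR application, at u' = Y/X
  have hv_adj2 : (algebraMap R K c / algebraMap R K q) ∈
      Algebra.adjoin R {algebraMap R K y / algebraMap R K x} := by
    obtain ⟨Ps, hPs, heq⟩ := hsq (algebraMap R K y / algebraMap R K x)
    have hmem : (algebraMap R K c / algebraMap R K q) ∈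
        ⋂ P ∈ Ps, locSet R (FractionRing R) P := by
      refine Set.mem_iInter₂.mpr (fun P hP => ?_)
      have hPp := hPs P hP
      have hulo : (algebraMap R K y / algebraMap R K x) ∈ locSet R K P := by
        have h0 : (algebraMap R K y / algebraMap R K x) ∈
            (↑(Algebra.adjoin R {algebraMap R K y / algebraMap R K x} :
              Subalgebra R (FractionRing R)) : Set (FractionRing R)) :=
          Algebra.subset_adjoin rfl
        rw [heq] at h0
        exact Set.mem_iInter₂.mp h0 P hP
      have hPne : P ≠ M := by
        intro hPM
        obtain ⟨s, hs, t, hst⟩ := (mem_locSet_div P hx).mp hulo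
        exact h₂ s (hPM ▸ hs) t hst
      exact hvloc P hPp hPne
    rw [← heq] at hmem
    exact hmem
  rw [hqdef, map_mul] at hv_adj1 hv_adj2
  obtain ⟨nn, mm, r, hckey⟩ := span_arg x y c hx hy hv_adj1 hv_adj2
  have hpow : c ^ (mm + nn + 1) ∈ M := by
    rw [hckey]
    exact M.mul_mem_right _ (M.mul_mem_left r (Ideal.pow_mem_of_mem M hxM _ (Nat.succ_pos nn)))
  exact hcM (hM.mem_of_pow_mem _ hpow)


lemma forward (hsq : IsSQQR R) (hdim : ringKrullDim R = 1)
    (hfin : ∀ a : R, a ≠ 0 → {P : Ideal R | P.IsPrime ∧ a ∈ P}.Finite) :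
    IsPrufer R := by
  intro P hP
  letI : IsDomain (Localization.AtPrime P) := IsLocalization.isDomain_of_local_atPrime hP
  set A := Localization.AtPrime P
  set φ := algebraMap R A with hφ
  have step : ∀ r r' : R, ∃ cc : A, φ r * cc = φ r' ∨ φ r' * cc = φ r := by
    intro r r'
    by_cases hr : r = 0
    · exact ⟨0, Or.inr (by simp [hr])⟩
    by_cases hr' : r' = 0
    · exact ⟨0, Or.inl (by simp [hr'])⟩
    rcases main_dvd hsq hdim hfin P hP r r' hr hr' with ⟨s, hs, t, hst⟩ | ⟨s, hs, t, hst⟩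
    · -- r * s = r' * t  :  φ r' divides φ r
      obtain ⟨ws, hws⟩ := IsLocalization.map_units A (⟨s, hs⟩ : P.primeCompl)
      refine ⟨φ t * ↑ws⁻¹, Or.inr ?_⟩
      have : φ r' * φ t = φ r * φ s := by
        rw [← map_mul, ← map_mul]; exact congrArg φ hst.symm
      calc φ r' * (φ t * ↑ws⁻¹) = (φ r' * φ t) * ↑ws⁻¹ := by ring
        _ = (φ r * φ s) * ↑ws⁻¹ := by rw [this]
        _ = φ r * (φ s * ↑ws⁻¹) := by ring
        _ = φ r := by rw [← hws, Units.mul_inv, mul_one]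
    · obtain ⟨ws, hws⟩ := IsLocalization.map_units A (⟨s, hs⟩ : P.primeCompl)
      refine ⟨φ t * ↑ws⁻¹, Or.inl ?_⟩
      have : φ r * φ t = φ r' * φ s := by
        rw [← map_mul, ← map_mul]; exact congrArg φ hst.symm
      calc φ r * (φ t * ↑ws⁻¹) = (φ r * φ t) * ↑ws⁻¹ := by ring
        _ = (φ r' * φ s) * ↑ws⁻¹ := by rw [this]
        _ = φ r' * (φ s * ↑ws⁻¹) := by ring
        _ = φ r' := by rw [← hws, Units.mul_inv, mul_one]
  have hcond : ∀ a b : A, ∃ c, a * c = b ∨ b * c = a := by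
    intro a b
    obtain ⟨⟨r₁, s₁⟩, h₁⟩ := IsLocalization.mk'_surjective P.primeCompl a
    obtain ⟨⟨r₂, s₂⟩, h₂⟩ := IsLocalization.mk'_surjective P.primeCompl b
    have ha : a * φ ↑s₁ = φ r₁ := by rw [← h₁]; exact IsLocalization.mk'_spec A r₁ s₁
    have hb : b * φ ↑s₂ = φ r₂ := by rw [← h₂]; exact IsLocalization.mk'_spec A r₂ s₂
    obtain ⟨w₁, hw₁⟩ := IsLocalization.map_units A s₁
    obtain ⟨w₂, hw₂⟩ := IsLocalization.map_units A s₂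
    obtain ⟨cc, hcc | hcc⟩ := step r₁ r₂
    · refine ⟨φ ↑s₁ * cc * ↑w₂⁻¹, Or.inl ?_⟩
      calc a * (φ ↑s₁ * cc * ↑w₂⁻¹) = (a * φ ↑s₁) * cc * ↑w₂⁻¹ := by ring
        _ = φ r₁ * cc * ↑w₂⁻¹ := by rw [ha]
        _ = φ r₂ * ↑w₂⁻¹ := by rw [hcc]
        _ = (b * φ ↑s₂) * ↑w₂⁻¹ := by rw [hb]
        _ = b * (φ ↑s₂ * ↑w₂⁻¹) := by ring
        _ = b := by rw [← hw₂, Units.mul_inv, mul_one]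
    · refine ⟨φ ↑s₂ * cc * ↑w₁⁻¹, Or.inr ?_⟩
      calc b * (φ ↑s₂ * cc * ↑w₁⁻¹) = (b * φ ↑s₂) * cc * ↑w₁⁻¹ := by ring
        _ = φ r₂ * cc * ↑w₁⁻¹ := by rw [hb]
        _ = φ r₁ * ↑w₁⁻¹ := by rw [hcc]
        _ = (a * φ ↑s₁) * ↑w₁⁻¹ := by rw [ha]
        _ = a * (φ ↑s₁ * ↑w₁⁻¹) := by ring
        _ = a := by rw [← hw₁, Units.mul_inv, mul_one]
  haveI : PreValuationRing (Localization.AtPrime P) := ⟨hcond⟩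
  exact ⟨⟩


def locSubalgebra (P : Ideal R) (hP : P.IsPrime) : Subalgebra R (FractionRing R) where
  carrier := locSet R (FractionRing R) P
  algebraMap_mem' := fun r =>
    ⟨1, fun h => hP.ne_top ((Ideal.eq_top_iff_one P).mpr h), r, by simp⟩
  one_mem' := ⟨1, fun h => hP.ne_top ((Ideal.eq_top_iff_one P).mpr h), 1, by simp⟩
  zero_mem' := ⟨1, fun h => hP.ne_top ((Ideal.eq_top_iff_one P).mpr h), 0, by simp⟩
  mul_mem' := by
    rintro a b ⟨s₁, hs₁, r₁, h1⟩ ⟨s₂, hs₂, r₂, h2⟩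
    refine ⟨s₁ * s₂, fun h => ((hP.mem_or_mem h).elim hs₁ hs₂), r₁ * r₂, ?_⟩
    rw [map_mul, map_mul]
    calc a * b * (algebraMap R (FractionRing R) s₁ * algebraMap R (FractionRing R) s₂)
        = (a * algebraMap R (FractionRing R) s₁) * (b * algebraMap R (FractionRing R) s₂) := by
          ring
      _ = _ := by rw [h1, h2]
  add_mem' := by
    rintro a b ⟨s₁, hs₁, r₁, h1⟩ ⟨s₂, hs₂, r₂, h2⟩
    refine ⟨s₁ * s₂, fun h => ((hP.mem_or_mem h).elim hs₁ hs₂), r₁ * s₂ + r₂ * s₁, ?_⟩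
    rw [map_mul, map_add, map_mul, map_mul]
    calc (a + b) * (algebraMap R (FractionRing R) s₁ * algebraMap R (FractionRing R) s₂)
        = (a * algebraMap R (FractionRing R) s₁) * algebraMap R (FractionRing R) s₂ +
          (b * algebraMap R (FractionRing R) s₂) * algebraMap R (FractionRing R) s₁ := by ring
      _ = _ := by rw [h1, h2]

lemma backward (hpr : IsPrufer R) : IsSQQR R := by
  intro u
  classical
  refine ⟨{P : Ideal R | P.IsPrime ∧ u ∈ locSet R (FractionRing R) P}, fun P hP => hP.1, ?_⟩
  apply Set.Subset.antisymm
  · intro w hw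
    refine Set.mem_iInter₂.mpr (fun P hP => ?_)
    obtain ⟨hPp, huP⟩ := hP
    have hle : Algebra.adjoin R {u} ≤ locSubalgebra P hPp :=
      Algebra.adjoin_le (Set.singleton_subset_iff.mpr huP)
    exact hle hw
  · intro w hw
    set T := Algebra.adjoin R {u} with hTdef
    set J : Ideal T :=
      { carrier := {t : T | (t : FractionRing R) * w ∈ T},
        zero_mem' := by
          show ((0 : T) : FractionRing R) * w ∈ T
          rw [ZeroMemClass.coe_zero, zero_mul]
          exact T.zero_mem
        add_mem' := by
          intro a b ha hb
          show ((a + b : T) : FractionRing R) * w ∈ T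
          rw [AddMemClass.coe_add, add_mul]
          exact T.add_mem ha hb
        smul_mem' := by
          intro c t ht
          show ((c • t : T) : FractionRing R) * w ∈ T
          have hsc : ((c • t : T) : FractionRing R) =
              (c : FractionRing R) * (t : FractionRing R) := rfl
          rw [hsc, mul_assoc]
          exact T.mul_mem c.2 ht } with hJdef
    by_cases hJtop : J = ⊤
    · have h1 : (1 : T) ∈ J := hJtop ▸ Submodule.mem_top
      have h2 : ((1 : T) : FractionRing R) * w ∈ T := h1
      rw [OneMemClass.coe_one, one_mul] at h2
      exact h2
    · exfalso
      obtain ⟨Q, hQmax, hJQ⟩ := Ideal.exists_le_maximal J hJtop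
      haveI hQp : Q.IsPrime := hQmax.isPrime
      set P := Q.comap (algebraMap R T) with hPdef
      have hPp : P.IsPrime := Ideal.IsPrime.comap _
      obtain ⟨xx, yy, hyy, hxy⟩ := IsFractionRing.div_surjective (A := R) u
      have hyy0 : yy ≠ 0 := nonZeroDivisors.ne_zero hyy
      have hY0 : algebraMap R (FractionRing R) yy ≠ 0 := by
        intro h
        exact hyy0 (IsFractionRing.injective R (FractionRing R) (by rw [h, map_zero]))
      letI : IsDomain (Localization.AtPrime P) := IsLocalization.isDomain_of_local_atPrime hPp
      haveI hval := hpr P hPp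
      set ψ := algebraMap R (Localization.AtPrime P) with hψ
      have huT : u ∈ T := by rw [hTdef]; exact Algebra.subset_adjoin rfl
      have huP : u ∈ locSet R (FractionRing R) P := by
        obtain ⟨cc, hcc | hcc⟩ := ValuationRing.cond (ψ xx) (ψ yy)
        · -- ψ xx * cc = ψ yy
          obtain ⟨⟨t, s⟩, hts⟩ := IsLocalization.mk'_surjective P.primeCompl cc
          have h0 : cc * ψ ↑s = ψ t := by
            rw [← hts]; exact IsLocalization.mk'_spec _ t s
          have h2 : ψ (xx * t) = ψ (yy * ↑s) := by
            rw [map_mul, map_mul]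
            calc ψ xx * ψ t = ψ xx * (cc * ψ ↑s) := by rw [h0]
              _ = (ψ xx * cc) * ψ ↑s := by ring
              _ = ψ yy * ψ ↑s := by rw [hcc]
          obtain ⟨σ, hσ⟩ := (IsLocalization.eq_iff_exists P.primeCompl _).mp h2
          have heqR : xx * (t * ↑σ) = yy * (↑s * ↑σ) := by linear_combination hσ
          have hcoeK : u * algebraMap R (FractionRing R) (t * ↑σ) =
              algebraMap R (FractionRing R) (↑s * ↑σ) := by
            rw [← hxy, div_mul_eq_mul_div, div_eq_iff hY0, ← map_mul, ← map_mul]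
            exact congrArg (algebraMap R (FractionRing R)) (by linear_combination heqR)
          by_cases htP : t * ↑σ ∈ P
          · exfalso
            have hprod : (⟨u, huT⟩ : T) * algebraMap R T (t * ↑σ) =
                algebraMap R T (↑s * ↑σ) := Subtype.ext hcoeK
            have hQ1 : algebraMap R T (t * ↑σ) ∈ Q := Ideal.mem_comap.mp htP
            have hQ2 : algebraMap R T (↑s * ↑σ) ∈ Q := hprod ▸ Q.mul_mem_left _ hQ1
            have hmem : (↑s * ↑σ : R) ∈ P := Ideal.mem_comap.mpr hQ2
            exact (hPp.mem_or_mem hmem).elim (fun h => s.2 h) (fun h => σ.2 h)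
          · exact ⟨t * ↑σ, htP, ↑s * ↑σ, hcoeK⟩
        · -- ψ yy * cc = ψ xx
          obtain ⟨⟨t, s⟩, hts⟩ := IsLocalization.mk'_surjective P.primeCompl cc
          have h0 : cc * ψ ↑s = ψ t := by
            rw [← hts]; exact IsLocalization.mk'_spec _ t s
          have h2 : ψ (yy * t) = ψ (xx * ↑s) := by
            rw [map_mul, map_mul]
            calc ψ yy * ψ t = ψ yy * (cc * ψ ↑s) := by rw [h0]
              _ = (ψ yy * cc) * ψ ↑s := by ring
              _ = ψ xx * ψ ↑s := by rw [hcc]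
          obtain ⟨σ, hσ⟩ := (IsLocalization.eq_iff_exists P.primeCompl _).mp h2
          have heqR : yy * (t * ↑σ) = xx * (↑s * ↑σ) := by linear_combination hσ
          refine ⟨↑s * ↑σ, fun h => (hPp.mem_or_mem h).elim (fun h' => s.2 h') (fun h' => σ.2 h'),
            t * ↑σ, ?_⟩
          rw [← hxy, div_mul_eq_mul_div, div_eq_iff hY0, ← map_mul, ← map_mul]
          exact congrArg (algebraMap R (FractionRing R)) (by linear_combination -heqR)
      have hwloc : w ∈ locSet R (FractionRing R) P := Set.mem_iInter₂.mp hw P ⟨hPp, huP⟩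
      obtain ⟨s₀, hs₀, r₀, hwr⟩ := hwloc
      have hsJ : algebraMap R T s₀ ∈ J := by
        show ((algebraMap R T s₀ : T) : FractionRing R) * w ∈ T
        have hcoe : ((algebraMap R T s₀ : T) : FractionRing R) =
            algebraMap R (FractionRing R) s₀ := rfl
        rw [hcoe, mul_comm, hwr]
        exact T.algebraMap_mem r₀
      exact hs₀ (Ideal.mem_comap.mpr (hJQ hsJ))


end Helpers

theorem stmt17 (R : Type*) [CommRing R] [IsDomain R]
    (hdim : ringKrullDim R = 1)
    (hfin : ∀ a : R, a ≠ 0 → {P : Ideal R | P.IsPrime ∧ a ∈ P}.Finite) :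
    IsSQQR R ↔ IsPrufer R := by
  exact ⟨fun hsq => forward hsq hdim hfin, fun hpr => backward hpr⟩

end
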